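/- Assume ‖x_t‖ ≤ 1 for all t = 1,…,T, b > 1, c > 0 with 1/b + 1/c < 1, and let a_t = 1/(1 − x_tᵀ A_{t−1}^{−1} x_t). Then the cumulative loss of WEMM is bounded as: L_T(WEMM) ≤ inf over all (u_1,…,u_T, ū) ∈ (ℝ^d)^{T+1} of ( b‖ū‖² + c·V_m + Σ_{t=1}^T (y_t − u_tᵀx_t)² + (S·b/(b−1))·ln det((1/b)·A_T) + T·S/( c(1 − b^{−1})² − (1 − b^{−1}) ) ), where V_m = Σ_{t=1}^T ‖u_t − ū‖² and S = sup_{1 ≤ t ≤ T} (y_t − u_tᵀx_t)². -/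

import Mathlib

open Matrix Finset

namespace Stmt18

variable {d : ℕ}

lemma dot_self_nonneg (v : Fin d → ℝ) : 0 ≤ v ⬝ᵥ v :=
  Finset.sum_nonneg fun i _ => mul_self_nonneg _

lemma dot_sq_le (v w : Fin d → ℝ) : (v ⬝ᵥ w)^2 ≤ (v ⬝ᵥ v) * (w ⬝ᵥ w) := by
  simpa only [dotProduct, ← sq] using Finset.sum_mul_sq_le_sq_mul_sq Finset.univ v w

lemma symm_dot {M : Matrix (Fin d) (Fin d) ℝ} (hM : M.IsSymm) (u w : Fin d → ℝ) :
    u ⬝ᵥ (M *ᵥ w) = w ⬝ᵥ (M *ᵥ u) := by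
  calc u ⬝ᵥ (M *ᵥ w) = (u ᵥ* M) ⬝ᵥ w := (dotProduct_mulVec u M w)
    _ = (Mᵀ *ᵥ u) ⬝ᵥ w := by rw [← Matrix.mulVec_transpose]
    _ = (M *ᵥ u) ⬝ᵥ w := by rw [hM]
    _ = w ⬝ᵥ (M *ᵥ u) := dotProduct_comm _ _

lemma vmv_mulVec (u v w : Fin d → ℝ) : vecMulVec u v *ᵥ w = (v ⬝ᵥ w) • u := by
  ext i
  simp only [mulVec, dotProduct, vecMulVec_apply, Pi.smul_apply, smul_eq_mul,
    Finset.sum_mul, Finset.mul_sum]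
  exact Finset.sum_congr rfl fun j _ => by ring

lemma mul_vmv (M : Matrix (Fin d) (Fin d) ℝ) (u v : Fin d → ℝ) :
    M * vecMulVec u v = vecMulVec (M *ᵥ u) v := by
  ext i j
  simp only [Matrix.mul_apply, vecMulVec_apply, mulVec, dotProduct, Finset.sum_mul]
  exact Finset.sum_congr rfl fun k _ => by ring

lemma vmv_mul (M : Matrix (Fin d) (Fin d) ℝ) (u v : Fin d → ℝ) (hM : M.IsSymm) :
    vecMulVec u v * M = vecMulVec u (M *ᵥ v) := by
  ext i j
  simp only [Matrix.mul_apply, vecMulVec_apply, mulVec, dotProduct, Finset.mul_sum]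
  refine Finset.sum_congr rfl fun k _ => ?_
  have : M k j = M j k := (hM.apply k j).symm
  rw [this]; ring

lemma smul_vmv (a : ℝ) (u v : Fin d → ℝ) :
    a • vecMulVec u v = vecMulVec (a • u) v := by
  ext i j; simp [vecMulVec_apply]; ring


lemma posdef_of_quad {M : Matrix (Fin d) (Fin d) ℝ} {b : ℝ} (hb : 0 < b)
    (hM : M.IsSymm) (hq : ∀ v, b * (v ⬝ᵥ v) ≤ v ⬝ᵥ (M *ᵥ v)) : M.PosDef := by
  rw [posDef_iff_dotProduct_mulVec]; constructor
  · rw [Matrix.IsHermitian, conjTranspose_eq_transpose_of_trivial]; exact hM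
  · intro v hv
    have h0 : 0 < v ⬝ᵥ v :=
      lt_of_le_of_ne (dot_self_nonneg v) fun h => hv ((dotProduct_self_eq_zero).1 h.symm)
    have := hq v
    simpa [star_trivial] using lt_of_lt_of_le (mul_pos hb h0) this

lemma isUnit_det_of_quad {M : Matrix (Fin d) (Fin d) ℝ} {b : ℝ} (hb : 0 < b)
    (hM : M.IsSymm) (hq : ∀ v, b * (v ⬝ᵥ v) ≤ v ⬝ᵥ (M *ᵥ v)) : IsUnit M.det :=
  isUnit_iff_ne_zero.2 (ne_of_gt (posdef_of_quad hb hM hq).det_pos)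

lemma inv_symm {M : Matrix (Fin d) (Fin d) ℝ} (hM : M.IsSymm) : (M⁻¹).IsSymm := by
  rw [Matrix.IsSymm, Matrix.transpose_nonsing_inv, hM]

lemma r_facts {M : Matrix (Fin d) (Fin d) ℝ} {b : ℝ} (hb : 1 < b)
    (hM : M.IsSymm) (hq : ∀ v, b * (v ⬝ᵥ v) ≤ v ⬝ᵥ (M *ᵥ v)) {x : Fin d → ℝ}
    (hx : x ⬝ᵥ x ≤ 1) :
    0 ≤ x ⬝ᵥ (M⁻¹ *ᵥ x) ∧ x ⬝ᵥ (M⁻¹ *ᵥ x) ≤ 1/b := by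
  have hb0 : (0:ℝ) < b := lt_trans one_pos hb
  have hdet : IsUnit M.det := isUnit_det_of_quad hb0 hM hq
  set u := M⁻¹ *ᵥ x with hu
  have hMu : M *ᵥ u = x := by
    rw [hu, Matrix.mulVec_mulVec, Matrix.mul_nonsing_inv _ hdet, Matrix.one_mulVec]
  have hs : x ⬝ᵥ u = u ⬝ᵥ (M *ᵥ u) := by rw [hMu]; exact dotProduct_comm _ _
  have h1 : b * (u ⬝ᵥ u) ≤ x ⬝ᵥ u := by rw [hs]; exact hq u
  have hu0 : 0 ≤ u ⬝ᵥ u := dot_self_nonneg u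
  have hs0 : 0 ≤ x ⬝ᵥ u := le_trans (mul_nonneg (le_of_lt hb0) hu0) h1
  refine ⟨hs0, ?_⟩
  have hcs : (x ⬝ᵥ u)^2 ≤ (x ⬝ᵥ x) * (u ⬝ᵥ u) := dot_sq_le x u
  have h2 : (x ⬝ᵥ u)^2 ≤ u ⬝ᵥ u := le_trans hcs (by nlinarith)
  have h3 : b * (x ⬝ᵥ u)^2 ≤ x ⬝ᵥ u := le_trans (mul_le_mul_of_nonneg_left h2 hb0.le) h1
  rw [le_div_iff₀ hb0]
  rcases eq_or_lt_of_le hs0 with h | h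
  · nlinarith [h]
  · exact le_of_mul_le_mul_right (by nlinarith [h3]) h


lemma a_facts {b r aa : ℝ} (hb : 1 < b) (hr0 : 0 ≤ r) (hr1 : r ≤ 1/b)
    (haa : aa = 1/(1-r)) :
    aa * (1 - r) = 1 ∧ 1 ≤ aa ∧ aa ≤ b/(b-1) ∧ aa - 1 ≤ b/(b-1) * Real.log aa := by
  have hb0 : (0:ℝ) < b := by linarith
  have h1r : 0 < 1 - r := by
    have : 1/b < 1 := by rw [div_lt_one hb0]; exact hb
    linarith
  have he : aa * (1 - r) = 1 := by rw [haa]; field_simp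
  have ha1 : 1 ≤ aa := by rw [haa, le_div_iff₀ h1r]; linarith
  have hab : aa ≤ b/(b-1) := by
    rw [haa, div_le_div_iff₀ h1r (by linarith)]
    have hbr : b * r ≤ 1 := by
      calc b * r ≤ b * (1/b) := mul_le_mul_of_nonneg_left hr1 hb0.le
        _ = 1 := by field_simp
    nlinarith
  have hlog : r ≤ Real.log aa := by
    have h2 : Real.log (1 - r) ≤ -r := by
      have := Real.log_le_sub_one_of_pos h1r; linarith
    rw [haa, one_div, Real.log_inv]; linarith
  have hbb : (0:ℝ) ≤ b/(b-1) := by apply div_nonneg <;> linarith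
  refine ⟨he, ha1, hab, ?_⟩
  calc aa - 1 = aa * r := by linear_combination he
    _ ≤ (b/(b-1)) * r := mul_le_mul_of_nonneg_right hab hr0
    _ ≤ (b/(b-1)) * Real.log aa := mul_le_mul_of_nonneg_left hlog hbb

lemma scalar_bound {b c aa la e δ S n : ℝ} (hb : 1 < b) (hcb : 1 < c * (1 - 1/b))
    (ha1 : 1 ≤ aa) (ha2 : aa ≤ b/(b-1)) (hla : aa - 1 ≤ b/(b-1) * la)
    (hS : e^2 ≤ S) (hd : δ^2 ≤ n) :
    aa*(e+δ)^2 ≤ e^2 + S*(b/(b-1))*la + c*n + S/(c*(1-b⁻¹)^2 - (1-b⁻¹)) := by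
  have hb0 : (0:ℝ) < b := by linarith
  obtain ⟨t, ht⟩ : ∃ t : ℝ, t = 1 - 1/b := ⟨_, rfl⟩
  rw [← ht] at hcb
  have ht0 : 0 < t := by
    have : 1/b < 1 := by rw [div_lt_one hb0]; exact hb
    rw [ht]; linarith
  obtain ⟨γ, hγdef⟩ : ∃ γ : ℝ, γ = c * t - 1 := ⟨_, rfl⟩
  have hγ : 0 < γ := by rw [hγdef]; linarith [hcb]
  have hβ : b/(b-1) = 1/t := by rw [ht]; field_simp
  have hD : c*(1-b⁻¹)^2 - (1-b⁻¹) = t*γ := by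
    rw [hγdef, ht]; rw [← one_div b]; ring
  have hS0 : 0 ≤ S := le_trans (sq_nonneg e) hS
  have hn0 : 0 ≤ n := le_trans (sq_nonneg δ) hd
  have haa0 : 0 < aa := by linarith
  have h2eδ : 2*e*δ ≤ e^2/γ + γ*δ^2 := by
    rw [div_add' _ _ _ (ne_of_gt hγ), le_div_iff₀ hγ]
    nlinarith [sq_nonneg (e - γ*δ)]
  have hc0 : 0 < c := by nlinarith [ht0, hcb]
  have hβγc : (b/(b-1)) * (1+γ) = c := by
    rw [hβ, hγdef]; field_simp; ring
  have hA : aa*(1+γ)*δ^2 ≤ c*n := by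
    have h1 : aa*(1+γ) ≤ c := by
      rw [← hβγc]; exact mul_le_mul_of_nonneg_right ha2 (by linarith)
    calc aa*(1+γ)*δ^2 ≤ c*δ^2 := mul_le_mul_of_nonneg_right h1 (sq_nonneg δ)
      _ ≤ c*n := mul_le_mul_of_nonneg_left hd hc0.le
  have hβ0 : 0 < b/(b-1) := by rw [hβ]; positivity
  have hB1 : aa*e^2 ≤ e^2 + S*(b/(b-1))*la := by
    have h1 : (aa-1)*e^2 ≤ (aa-1)*S := mul_le_mul_of_nonneg_left hS (by linarith)
    have h2 : (aa-1)*S ≤ (b/(b-1)*la)*S := mul_le_mul_of_nonneg_right hla hS0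
    nlinarith [h1, h2]
  have hB2 : (aa/γ)*e^2 ≤ S/(t*γ) := by
    have h1 : (aa/γ)*e^2 ≤ (aa/γ)*S := mul_le_mul_of_nonneg_left hS (by positivity)
    have h2 : aa/γ ≤ (1/t)/γ := by
      gcongr
      rw [← hβ]; exact ha2
    have h3 : (aa/γ)*S ≤ ((1/t)/γ)*S := mul_le_mul_of_nonneg_right h2 hS0
    have h4 : ((1/t)/γ)*S = S/(t*γ) := by field_simp
    linarith [h1, h3, h4.le]
  have hmain : aa*(e+δ)^2 ≤ aa*e^2 + (aa/γ)*e^2 + aa*(1+γ)*δ^2 := by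
    have h1 : aa*(2*e*δ) ≤ aa*(e^2/γ + γ*δ^2) := mul_le_mul_of_nonneg_left h2eδ haa0.le
    have h2 : aa*(e^2/γ) = (aa/γ)*e^2 := by ring
    nlinarith [h1]
  rw [hD]
  linarith [hmain, hA, hB1, hB2]


lemma vmv_symm (u : Fin d → ℝ) : (vecMulVec u u).IsSymm := by
  rw [Matrix.IsSymm]; ext i j
  simp [vecMulVec_apply, Matrix.transpose_apply, mul_comm]

lemma vmv_smul_right (u v : Fin d → ℝ) (k : ℝ) :
    vecMulVec u (k • v) = k • vecMulVec u v := by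
  ext i j; simp [vecMulVec_apply]; ring

lemma row_mul_col_entry (M : Matrix (Fin d) (Fin d) ℝ) (u v : Fin d → ℝ) (i j : Unit) :
    (replicateRow Unit u * M * replicateCol Unit v) i j = (u ᵥ* M) ⬝ᵥ v := by
  simp [Matrix.mul_apply, Matrix.replicateRow_apply, Matrix.replicateCol_apply, Matrix.vecMul,
    dotProduct, Finset.sum_mul]

lemma sum_dot {F : Finset ℕ} (f : ℕ → Fin d → ℝ) (w : Fin d → ℝ) :
    (∑ s ∈ F, f s) ⬝ᵥ w = ∑ s ∈ F, f s ⬝ᵥ w := by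
  simp only [dotProduct, Finset.sum_apply, Finset.sum_mul]
  exact Finset.sum_comm

end Stmt18

open Stmt18

/-- the cumulative loss of WEMM is at most the infimum over all
tuples `(u_1,…,u_T, ū)` of
`b‖ū‖² + c·V_m + L_T(u_1,…,u_T) + (S·b/(b−1))·ln det((1/b)·A_T)
  + T·S/(c(1 − b⁻¹)² − (1 − b⁻¹))`,
where `V_m = Σ‖u_t − ū‖²` and `S = sup_{1≤t≤T} (y_t − u_tᵀx_t)²`. -/
theorem stmt_18 {d T : ℕ} (b c : ℝ) (hb : 1 < b) (hc : 0 < c)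
    (hbc : 1 / b + 1 / c < 1)
    (x : ℕ → (Fin d → ℝ)) (hx : ∀ t ∈ Icc 1 T, x t ⬝ᵥ x t ≤ 1)
    (y : ℕ → ℝ)
    (a : ℕ → ℝ) (A : ℕ → Matrix (Fin d) (Fin d) ℝ)
    (hA0 : A 0 = b • (1 : Matrix (Fin d) (Fin d) ℝ))
    (ha : ∀ t ∈ Icc 1 T, a t = 1 / (1 - x t ⬝ᵥ ((A (t - 1))⁻¹ *ᵥ x t)))
    (hArec : ∀ t ∈ Icc 1 T, A t = A (t - 1) + a t • vecMulVec (x t) (x t))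
    (Bv : ℕ → (Fin d → ℝ))
    (hBv : ∀ t, Bv t = ∑ s ∈ Icc 1 t, (a s * y s) • x s) :
    ∑ t ∈ Icc 1 T, (y t - Bv (t - 1) ⬝ᵥ ((A (t - 1))⁻¹ *ᵥ x t)) ^ 2
      ≤ ⨅ p : (ℕ → Fin d → ℝ) × (Fin d → ℝ),
          (b * (p.2 ⬝ᵥ p.2)
            + c * ∑ t ∈ Icc 1 T, ((p.1 t - p.2) ⬝ᵥ (p.1 t - p.2))
            + ∑ t ∈ Icc 1 T, (y t - p.1 t ⬝ᵥ x t) ^ 2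
            + sSup ((fun t => (y t - p.1 t ⬝ᵥ x t) ^ 2) '' Set.Icc 1 T) * b / (b - 1)
                * Real.log (((1 / b) • A T).det)
            + (T : ℝ) * sSup ((fun t => (y t - p.1 t ⬝ᵥ x t) ^ 2) '' Set.Icc 1 T)
                / (c * (1 - b⁻¹) ^ 2 - (1 - b⁻¹))) := by
  classical
  have hb0 : (0:ℝ) < b := lt_trans one_pos hb
  have hb1 : (0:ℝ) < b - 1 := by linarith
  -- trivial case T = 0
  rcases Nat.eq_zero_or_pos T with rfl | hT1
  · refine le_ciInf fun p => ?_
    have hI : Icc 1 0 = (∅ : Finset ℕ) := rfl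
    have hI2 : Set.Icc 1 0 = (∅ : Set ℕ) := Set.Icc_eq_empty (by norm_num)
    rw [hI, hI2]
    simp only [Finset.sum_empty, Set.image_empty, Real.sSup_empty, Nat.cast_zero]
    have := dot_self_nonneg p.2
    have h0 : 0 ≤ b * (p.2 ⬝ᵥ p.2) := mul_nonneg hb0.le this
    simp only [mul_zero, zero_mul, zero_div, add_zero, zero_add]
    nlinarith [h0]
  -- main case
  refine le_ciInf fun p => ?_
  obtain ⟨u, w⟩ := p
  -- Invariant: symmetry and quadratic lower bound
  have hP : ∀ t, t ≤ T →
      (A t).IsSymm ∧ ∀ v : Fin d → ℝ, b * (v ⬝ᵥ v) ≤ v ⬝ᵥ (A t *ᵥ v) := by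
    intro t
    induction t with
    | zero =>
      intro _
      refine ⟨?_, ?_⟩
      · rw [hA0, Matrix.IsSymm, Matrix.transpose_smul, Matrix.transpose_one]
      · intro v
        rw [hA0, Matrix.smul_mulVec, Matrix.one_mulVec, dotProduct_smul]
        simp [smul_eq_mul]
    | succ t ih =>
      intro hle
      obtain ⟨hs, hq⟩ := ih (by omega)
      have htm : t + 1 ∈ Icc 1 T := by rw [Finset.mem_Icc]; omega
      have hxt : x (t+1) ⬝ᵥ x (t+1) ≤ 1 := hx _ htm
      obtain ⟨hr0, hr1⟩ := r_facts hb hs hq hxt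
      have haeq : a (t+1) = 1 / (1 - x (t+1) ⬝ᵥ ((A t)⁻¹ *ᵥ x (t+1))) := by
        have := ha (t+1) htm
        simpa [Nat.add_sub_cancel] using this
      obtain ⟨he, ha1, ha2, hla⟩ := a_facts hb hr0 hr1 haeq
      have hArec' : A (t+1) = A t + a (t+1) • vecMulVec (x (t+1)) (x (t+1)) := by
        have := hArec (t+1) htm
        simpa [Nat.add_sub_cancel] using this
      refine ⟨?_, ?_⟩
      · rw [hArec', Matrix.IsSymm, Matrix.transpose_add, hs, Matrix.transpose_smul,
          vmv_symm (x (t+1))]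
      · intro v
        rw [hArec', Matrix.add_mulVec, dotProduct_add, Matrix.smul_mulVec,
          vmv_mulVec]
        have hterm : v ⬝ᵥ (a (t+1) • ((x (t+1) ⬝ᵥ v) • x (t+1)))
            = a (t+1) * (x (t+1) ⬝ᵥ v)^2 := by
          rw [dotProduct_smul, dotProduct_smul, smul_eq_mul, smul_eq_mul,
            dotProduct_comm]
          ring
        rw [hterm]
        have h1 : 0 ≤ a (t+1) * (x (t+1) ⬝ᵥ v)^2 :=
          mul_nonneg (by linarith) (sq_nonneg _)
        linarith [hq v]
  -- Key identities by induction
  have hKey : ∀ t, t ≤ T →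
      (A t).det = b^d * ∏ s ∈ Icc 1 t, a s ∧
      Bv t ⬝ᵥ ((A t)⁻¹ *ᵥ Bv t)
        = ∑ s ∈ Icc 1 t,
            (a s * (y s)^2 - (y s - Bv (s-1) ⬝ᵥ ((A (s-1))⁻¹ *ᵥ x s))^2) ∧
      (∀ v : Fin d → ℝ, v ⬝ᵥ (A t *ᵥ v)
        = b * (v ⬝ᵥ v) + ∑ s ∈ Icc 1 t, a s * (x s ⬝ᵥ v)^2) := by
    intro t
    induction t with
    | zero =>
      refine fun _ => ⟨?_, ?_, ?_⟩
      · rw [hA0, Matrix.det_smul, Matrix.det_one]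
        simp
      · have hBv0 : Bv 0 = 0 := by rw [hBv 0]; simp
        rw [hBv0]
        simp
      · intro v
        rw [hA0, Matrix.smul_mulVec, Matrix.one_mulVec, dotProduct_smul]
        simp [smul_eq_mul]
    | succ t ih =>
      intro hle
      obtain ⟨ihdet, ihQ, ihquad⟩ := ih (by omega)
      obtain ⟨hs, hq⟩ := hP t (by omega)
      have htm : t + 1 ∈ Icc 1 T := by rw [Finset.mem_Icc]; omega
      have hxt : x (t+1) ⬝ᵥ x (t+1) ≤ 1 := hx _ htm
      obtain ⟨hr0, hr1⟩ := r_facts hb hs hq hxt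
      have haeq : a (t+1) = 1 / (1 - x (t+1) ⬝ᵥ ((A t)⁻¹ *ᵥ x (t+1))) := by
        simpa [Nat.add_sub_cancel] using ha (t+1) htm
      obtain ⟨he, ha1, ha2, hla⟩ := a_facts hb hr0 hr1 haeq
      have hArec' : A (t+1) = A t + a (t+1) • vecMulVec (x (t+1)) (x (t+1)) := by
        simpa [Nat.add_sub_cancel] using hArec (t+1) htm
      have hdetM : IsUnit (A t).det := isUnit_det_of_quad hb0 hs hq
      have hMinvsymm : ((A t)⁻¹).IsSymm := inv_symm hs
      set X := x (t+1) with hX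
      set v := (A t)⁻¹ *ᵥ X with hv
      have hMv : A t *ᵥ v = X := by
        rw [hv, Matrix.mulVec_mulVec, Matrix.mul_nonsing_inv _ hdetM, Matrix.one_mulVec]
      have hvX : v ⬝ᵥ X = X ⬝ᵥ v := dotProduct_comm _ _
      -- inverse update formula
      have hmul1 : A (t+1) * ((A t)⁻¹ - vecMulVec v v) = 1 := by
        rw [hArec', Matrix.add_mul, Matrix.mul_sub, Matrix.smul_mul, Matrix.mul_sub,
          Matrix.mul_nonsing_inv _ hdetM, mul_vmv, hMv, vmv_mul _ _ _ hMinvsymm,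
          vmv_mul _ _ _ (vmv_symm v), vmv_mulVec, vmv_smul_right, hvX]
        have hcoef : a (t+1) • (vecMulVec X v - (X ⬝ᵥ v) • vecMulVec X v)
            = vecMulVec X v := by
          rw [smul_sub, smul_smul, ← sub_smul]
          have h1 : a (t+1) - a (t+1) * (X ⬝ᵥ v) = 1 := by linear_combination he
          rw [h1, one_smul]
        rw [hcoef]
        abel
      have hAinv : (A (t+1))⁻¹ = (A t)⁻¹ - vecMulVec v v := Matrix.inv_eq_right_inv hmul1
      -- determinant update
      have hdetstep : (A (t+1)).det = a (t+1) * (A t).det := by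
        rw [hArec', smul_vmv, vecMulVec_eq Unit, Matrix.det_add_replicateCol_mul_replicateRow hdetM]
        rw [Matrix.det_unique (1 + replicateRow Unit X * (A t)⁻¹ * replicateCol Unit (a (t+1) • X)),
          Matrix.add_apply, Matrix.one_apply_eq, row_mul_col_entry]
        have hvm : X ᵥ* (A t)⁻¹ = v := by
          rw [hv, ← Matrix.mulVec_transpose]
          congr 1
        rw [hvm, dotProduct_smul, smul_eq_mul, hvX]
        have : 1 + a (t+1) * (X ⬝ᵥ v) = a (t+1) := by linarith [he]
        rw [this]
        ring
      -- Bv update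
      have hBvstep : Bv (t+1) = Bv t + (a (t+1) * y (t+1)) • X := by
        rw [hBv (t+1), hBv t, Finset.sum_Icc_succ_top (by omega : 1 ≤ t + 1)]
      refine ⟨?_, ?_, ?_⟩
      · rw [hdetstep, ihdet, Finset.prod_Icc_succ_top (by omega : 1 ≤ t + 1)]
        ring
      · rw [Finset.sum_Icc_succ_top (by omega : 1 ≤ t + 1), ← ihQ]
        have hsub : t + 1 - 1 = t := by omega
        rw [hsub]
        rw [hBvstep, hAinv, Matrix.sub_mulVec, Matrix.mulVec_add, Matrix.mulVec_smul,
          vmv_mulVec]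
        have hc2 : X ⬝ᵥ ((A t)⁻¹ *ᵥ Bv t) = Bv t ⬝ᵥ v := by
          rw [hv]; exact symm_dot hMinvsymm X (Bv t)
        simp only [dotProduct_add, add_dotProduct, dotProduct_sub, sub_dotProduct,
          dotProduct_smul, smul_dotProduct, smul_eq_mul, hc2,
          dotProduct_comm v (Bv t), dotProduct_comm v X, ← hv]
        linear_combination (2 * (y (t+1)) * (Bv t ⬝ᵥ v)
          + (y (t+1))^2 * (a (t+1) * (X ⬝ᵥ v) - 1)) * he
      · intro vv
        rw [hArec', Matrix.add_mulVec, dotProduct_add, Matrix.smul_mulVec,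
          vmv_mulVec, ihquad vv, Finset.sum_Icc_succ_top (by omega : 1 ≤ t + 1)]
        rw [dotProduct_smul, dotProduct_smul, smul_eq_mul, smul_eq_mul,
          dotProduct_comm vv X]
        ring
  obtain ⟨hdetT, hQT, hquadT⟩ := hKey T le_rfl
  obtain ⟨hsT, hqT⟩ := hP T le_rfl
  have hdetTU : IsUnit (A T).det := isUnit_det_of_quad hb0 hsT hqT
  have hfacts : ∀ t ∈ Icc 1 T,
      1 ≤ a t ∧ a t ≤ b/(b-1) ∧ a t - 1 ≤ b/(b-1) * Real.log (a t) := by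
    intro t htm
    have htm' : t - 1 ≤ T := by rw [Finset.mem_Icc] at htm; omega
    obtain ⟨hs, hq⟩ := hP (t-1) htm'
    obtain ⟨hr0, hr1⟩ := r_facts hb hs hq (hx t htm)
    obtain ⟨_, h1, h2, h3⟩ := a_facts hb hr0 hr1 (ha t htm)
    exact ⟨h1, h2, h3⟩
  have hL : ∑ t ∈ Icc 1 T, (y t - Bv (t - 1) ⬝ᵥ ((A (t - 1))⁻¹ *ᵥ x t)) ^ 2
      = (∑ t ∈ Icc 1 T, a t * (y t)^2) - Bv T ⬝ᵥ ((A T)⁻¹ *ᵥ Bv T) := by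
    rw [hQT, Finset.sum_sub_distrib]
    ring
  have hMv2 : A T *ᵥ ((A T)⁻¹ *ᵥ Bv T) = Bv T := by
    rw [Matrix.mulVec_mulVec, Matrix.mul_nonsing_inv _ hdetTU, Matrix.one_mulVec]
  have hexp : (w - (A T)⁻¹ *ᵥ Bv T) ⬝ᵥ (A T *ᵥ (w - (A T)⁻¹ *ᵥ Bv T))
      = w ⬝ᵥ (A T *ᵥ w) - 2*(Bv T ⬝ᵥ w) + Bv T ⬝ᵥ ((A T)⁻¹ *ᵥ Bv T) := by
    rw [Matrix.mulVec_sub, hMv2, sub_dotProduct, dotProduct_sub, dotProduct_sub,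
      symm_dot hsT ((A T)⁻¹ *ᵥ Bv T) w, hMv2,
      dotProduct_comm ((A T)⁻¹ *ᵥ Bv T) (Bv T), dotProduct_comm w (Bv T)]
    ring
  have hQge : 2*(Bv T ⬝ᵥ w) - w ⬝ᵥ (A T *ᵥ w) ≤ Bv T ⬝ᵥ ((A T)⁻¹ *ᵥ Bv T) := by
    have h0 : 0 ≤ (w - (A T)⁻¹ *ᵥ Bv T) ⬝ᵥ (A T *ᵥ (w - (A T)⁻¹ *ᵥ Bv T)) :=
      le_trans (mul_nonneg hb0.le (dot_self_nonneg _)) (hqT _)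
    linarith [h0, hexp.le, hexp.ge]
  have hlin : Bv T ⬝ᵥ w = ∑ t ∈ Icc 1 T, (a t * y t) * (x t ⬝ᵥ w) := by
    rw [hBv T, sum_dot]
    exact Finset.sum_congr rfl fun t _ => by rw [smul_dotProduct, smul_eq_mul]
  have hsum : ∑ t ∈ Icc 1 T, a t * (y t - x t ⬝ᵥ w)^2
      = (∑ t ∈ Icc 1 T, a t * (y t)^2)
        - 2*(∑ t ∈ Icc 1 T, (a t * y t) * (x t ⬝ᵥ w))
        + ∑ t ∈ Icc 1 T, a t * (x t ⬝ᵥ w)^2 := by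
    rw [Finset.mul_sum, ← Finset.sum_sub_distrib, ← Finset.sum_add_distrib]
    exact Finset.sum_congr rfl fun t _ => by ring
  have hmid : ∑ t ∈ Icc 1 T, (y t - Bv (t - 1) ⬝ᵥ ((A (t - 1))⁻¹ *ᵥ x t)) ^ 2
      ≤ b * (w ⬝ᵥ w) + ∑ t ∈ Icc 1 T, a t * (y t - x t ⬝ᵥ w)^2 := by
    rw [hL, hsum]
    have hq2 := hQge
    rw [hquadT w, hlin] at hq2
    linarith [hq2]
  set S := sSup ((fun t => (y t - u t ⬝ᵥ x t) ^ 2) '' Set.Icc 1 T) with hSdef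
  have hbdd : BddAbove ((fun t => (y t - u t ⬝ᵥ x t) ^ 2) '' Set.Icc 1 T) :=
    ((Set.finite_Icc 1 T).image _).bddAbove
  have hSge : ∀ t ∈ Icc 1 T, (y t - u t ⬝ᵥ x t)^2 ≤ S := by
    intro t htm
    rw [Finset.mem_Icc] at htm
    exact le_csSup hbdd (Set.mem_image_of_mem _ (Set.mem_Icc.2 htm))
  have hS0 : 0 ≤ S :=
    le_trans (sq_nonneg _) (hSge 1 (Finset.mem_Icc.2 ⟨le_refl 1, hT1⟩))
  have hane : ∀ t ∈ Icc 1 T, a t ≠ 0 := fun t htm =>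
    ne_of_gt (lt_of_lt_of_le one_pos (hfacts t htm).1)
  have hlog : Real.log (((1 / b) • A T).det) = ∑ t ∈ Icc 1 T, Real.log (a t) := by
    rw [Matrix.det_smul, hdetT, Fintype.card_fin]
    have h1 : (1/b)^d * (b^d * ∏ s ∈ Icc 1 T, a s) = ∏ s ∈ Icc 1 T, a s := by
      rw [div_pow, one_pow]; field_simp
    rw [h1, Real.log_prod hane]
  have hcb : 1 < c * (1 - 1/b) := by
    have h1 : 1/c < 1 - 1/b := by linarith
    have h2 : c * (1/c) = 1 := by field_simp
    nlinarith [mul_lt_mul_of_pos_left h1 hc]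
  have hper : ∀ t ∈ Icc 1 T, a t * (y t - x t ⬝ᵥ w)^2
      ≤ (y t - u t ⬝ᵥ x t)^2 + S*(b/(b-1))*Real.log (a t)
        + c*((u t - w) ⬝ᵥ (u t - w)) + S/(c*(1-b⁻¹)^2 - (1-b⁻¹)) := by
    intro t htm
    obtain ⟨h1, h2, h3⟩ := hfacts t htm
    have hδ : ((u t - w) ⬝ᵥ x t)^2 ≤ (u t - w) ⬝ᵥ (u t - w) :=
      le_trans (dot_sq_le _ _)
        (mul_le_of_le_one_right (dot_self_nonneg _) (hx t htm))
    have heq : y t - x t ⬝ᵥ w = (y t - u t ⬝ᵥ x t) + ((u t - w) ⬝ᵥ x t) := by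
      rw [sub_dotProduct, dotProduct_comm (x t) w]
      ring
    rw [heq]
    exact scalar_bound hb hcb h1 h2 h3 (hSge t htm) hδ
  refine le_trans hmid (le_trans (add_le_add_right (Finset.sum_le_sum hper) _)
    (le_of_eq ?_))
  have hfin : ∑ t ∈ Icc 1 T, ((y t - u t ⬝ᵥ x t)^2 + S*(b/(b-1))*Real.log (a t)
        + c*((u t - w) ⬝ᵥ (u t - w)) + S/(c*(1-b⁻¹)^2 - (1-b⁻¹)))
      = (∑ t ∈ Icc 1 T, (y t - u t ⬝ᵥ x t)^2)
        + S*(b/(b-1))*(∑ t ∈ Icc 1 T, Real.log (a t))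
        + c*(∑ t ∈ Icc 1 T, ((u t - w) ⬝ᵥ (u t - w)))
        + (T:ℝ)*(S/(c*(1-b⁻¹)^2 - (1-b⁻¹))) := by
    rw [Finset.sum_add_distrib, Finset.sum_add_distrib, Finset.sum_add_distrib,
      Finset.mul_sum, Finset.mul_sum, Finset.sum_const, Nat.card_Icc]
    simp only [nsmul_eq_mul, Nat.add_sub_cancel]
  rw [hfin, hlog]
  ring
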